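/- For every natural number n, it is not the case that G_{n+1} ≤ G_n. -/

import Mathlib

universe u

/-- Pre-games (as in the older Mathlib's `SetTheory.PGame`, since removed from Mathlib). -/
inductive SetTheory.PGame : Type (u + 1)
  | mk : ∀ α β : Type u, (α → SetTheory.PGame) → (β → SetTheory.PGame) → SetTheory.PGame

/-- The pre-game `0 = { | }` (as in the older Mathlib). -/
instance SetTheory.PGame.instZero : Zero SetTheory.PGame :=
  ⟨⟨PEmpty, PEmpty, PEmpty.elim, PEmpty.elim⟩⟩

/-- Combinatorial games over a poset `A` of atoms: either an atomic game `[a]` for an atom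
`a : A`, or a composite game `⟨L|R⟩` where `L` and `R` are nonempty families of games
(the left and right options). -/
inductive PoGame (A : Type u) : Type (u + 1) where
  | atom : A → PoGame A
  | mk : (xl xr : Type u) → (xl → PoGame A) → (xr → PoGame A) →
      Nonempty xl → Nonempty xr → PoGame A

namespace PoGame

variable {A : Type u}

/-- `G` is an atomic game. -/
def IsAtomic : PoGame A → Prop
  | atom _ => True
  | mk _ _ _ _ _ _ => False

/-- `G` is a left option of the game given as second argument. -/
def IsLeftOption (G : PoGame A) : PoGame A → Prop
  | atom _ => False
  | mk _ _ L _ _ _ => ∃ i, L i = G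

/-- `G` is a right option of the game given as second argument. -/
def IsRightOption (G : PoGame A) : PoGame A → Prop
  | atom _ => False
  | mk _ _ _ R _ _ => ∃ j, R j = G

section Order

variable [PartialOrder A]

mutual
  /-- `Le G H` is the relation `G ≤ H` on games over the poset `A`, defined by mutual
  recursion with `Lf` (the relation `G ⊲ H`): `G ≤ H` iff every left option `G^L`
  satisfies `G^L ⊲ H`, every right option `H^R` satisfies `G ⊲ H^R`, and if `G` or `H`
  is atomic then `G ⊲ H`. -/
  inductive Le : PoGame A → PoGame A → Prop
    | intro (G H : PoGame A)
        (hL : ∀ G', IsLeftOption G' G → Lf G' H)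
        (hR : ∀ H', IsRightOption H' H → Lf G H')
        (hA : IsAtomic G ∨ IsAtomic H → Lf G H) : Le G H

  /-- `Lf G H` is the relation `G ⊲ H` on games over the poset `A`: it holds iff some
  right option `G^R` satisfies `G^R ≤ H`, or some left option `H^L` satisfies `G ≤ H^L`,
  or `G = [a]` and `H = [b]` are atomic with `a ≤ b` in `A`. -/
  inductive Lf : PoGame A → PoGame A → Prop
    | rightOption (G H G' : PoGame A) (h : IsRightOption G' G) (hle : Le G' H) : Lf G H
    | leftOption (G H H' : PoGame A) (h : IsLeftOption H' H) (hle : Le G H') : Lf G H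
    | atom (a b : A) (hab : a ≤ b) : Lf (atom a) (atom b)
end

/-- Two games are equivalent if `G ≤ H` and `H ≤ G`. -/
def GEquiv (G H : PoGame A) : Prop := Le G H ∧ Le H G

/-- `G` is locally monotone if `G ≤ G^L` for every left option `G^L` and `G^R ≤ G` for
every right option `G^R`. -/
def LocallyMonotone (G : PoGame A) : Prop :=
  (∀ G', IsLeftOption G' G → Le G G') ∧ (∀ G', IsRightOption G' G → Le G' G)

/-- `G` is an option (left or right) of `H`. -/
def IsOption (G H : PoGame A) : Prop := IsLeftOption G H ∨ IsRightOption G H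

/-- `G` is a position of `H`: `H` itself, an option of `H`, an option of an option, etc. -/
def IsPosition (G H : PoGame A) : Prop := Relation.ReflTransGen IsOption G H

/-- `G` is monotone if every position of `G` is locally monotone. -/
def Monotone (G : PoGame A) : Prop := ∀ K, IsPosition K G → LocallyMonotone K

end Order

/-- The 5-element linearly ordered set `L5 = {-3, -2, -1, 0, 1}`. -/
abbrev L5 : Type := {a : ℤ // -3 ≤ a ∧ a ≤ 1}

/-- `G` has mean `C`: an atomic game `[a]` has mean `a`, and a composite game has mean `C`
iff every left option has mean `C + 1` and every right option has mean `C - 1`. -/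
def HasMean : PoGame L5 → ℤ → Prop
  | atom a, C => (a : ℤ) = C
  | mk _ _ L R _ _, C => (∀ i, HasMean (L i) (C + 1)) ∧ (∀ j, HasMean (R j) (C - 1))

/-- The game `⟨G | H⟩` with a single left option `G` and a single right option `H`. -/
def ofPair (G H : PoGame A) : PoGame A :=
  mk PUnit PUnit (fun _ => G) (fun _ => H) ⟨PUnit.unit⟩ ⟨PUnit.unit⟩

/-- `⋆ = ⟨-1 | -3⟩`. -/
def star : PoGame L5 := ofPair (atom ⟨-1, by norm_num⟩) (atom ⟨-3, by norm_num⟩)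

/-- `M(G) = ⟨1 | G⟩`. -/
def M (G : PoGame L5) : PoGame L5 := ofPair (atom ⟨1, by norm_num⟩) G

/-- `P(G) = ⟨G | -2⟩`. -/
def P (G : PoGame L5) : PoGame L5 := ofPair G (atom ⟨-2, by norm_num⟩)

/-- `P⋆(G) = ⟨G | ⋆⟩`. -/
def Pstar (G : PoGame L5) : PoGame L5 := ofPair G star

/-- `Pn n G = P G` if `n` is odd, `P⋆ G` if `n` is even. -/
def Pn (n : ℕ) (G : PoGame L5) : PoGame L5 := if Odd n then P G else Pstar G

/-- The sequence `G_0 = [0]`, `G_{n+1} = M (Pn n (G_n))`. -/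
def Gseq : ℕ → PoGame L5
  | 0 => atom ⟨0, by norm_num⟩
  | n + 1 => M (Pn n (Gseq n))

/-- The normal-play game obtained from a game over `L5` by replacing every atom by the
normal-play game `0 = { | }`, keeping the tree of left and right options. -/
def np : PoGame L5 → SetTheory.PGame.{0}
  | atom _ => 0
  | mk xl xr L R _ _ => SetTheory.PGame.mk xl xr (fun i => np (L i)) (fun j => np (R j))

end PoGame

namespace PoGame

lemma le_inv {G H : PoGame L5} (h : Le G H) :
    (∀ G', IsLeftOption G' G → Lf G' H) ∧ (∀ H', IsRightOption H' H → Lf G H') ∧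
    (IsAtomic G ∨ IsAtomic H → Lf G H) := by
  cases h with
  | intro _ _ hL hR hA => exact ⟨hL, hR, hA⟩

lemma lf_inv {G H : PoGame L5} (h : Lf G H) :
    (∃ G', IsRightOption G' G ∧ Le G' H) ∨ (∃ H', IsLeftOption H' H ∧ Le G H') ∨
    (∃ a b : L5, G = atom a ∧ H = atom b ∧ a ≤ b) := by
  cases h with
  | rightOption _ _ G' h hle => exact Or.inl ⟨G', h, hle⟩
  | leftOption _ _ H' h hle => exact Or.inr (Or.inl ⟨H', h, hle⟩)
  | atom a b hab => exact Or.inr (Or.inr ⟨a, b, rfl, rfl, hab⟩)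

lemma leftOption_ofPair {G H K : PoGame L5} (h : IsLeftOption K (ofPair G H)) : K = G := by
  obtain ⟨_, h⟩ := h; exact h.symm

lemma rightOption_ofPair {G H K : PoGame L5} (h : IsRightOption K (ofPair G H)) : K = H := by
  obtain ⟨_, h⟩ := h; exact h.symm

lemma leftOption_ofPair_self (G H : PoGame L5) : IsLeftOption G (ofPair G H) := ⟨PUnit.unit, rfl⟩

lemma rightOption_ofPair_self (G H : PoGame L5) : IsRightOption H (ofPair G H) := ⟨PUnit.unit, rfl⟩

/-- The right "boundary" of `Pn n`. -/
def rn (n : ℕ) : PoGame L5 := if Odd n then atom ⟨-2, by norm_num⟩ else star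

lemma pn_eq (n : ℕ) (G : PoGame L5) : Pn n G = ofPair G (rn n) := by
  unfold Pn rn P Pstar
  split <;> rfl

lemma leftOption_pn (n : ℕ) (G : PoGame L5) : IsLeftOption G (Pn n G) := by
  rw [pn_eq]; exact leftOption_ofPair_self _ _

lemma rightOption_pn (n : ℕ) (G : PoGame L5) : IsRightOption (rn n) (Pn n G) := by
  rw [pn_eq]; exact rightOption_ofPair_self _ _

lemma lf_atom_le {a b : L5} (h : Lf (atom a) (atom b)) : a ≤ b := by
  rcases lf_inv h with ⟨G', hG', _⟩ | ⟨H', hH', _⟩ | ⟨a', b', ha, hb, hab⟩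
  · cases hG'
  · cases hH'
  · cases ha; cases hb; exact hab

lemma not_le_neg2_star : ¬ Le (atom ⟨-2, by norm_num⟩) star := by
  intro h
  have h1 := (le_inv h).2.1 (atom ⟨-3, by norm_num⟩)
    (show IsRightOption _ (ofPair (atom ⟨-1, by norm_num⟩) (atom ⟨-3, by norm_num⟩)) from
      rightOption_ofPair_self _ _)
  exact absurd (Subtype.mk_le_mk.mp (lf_atom_le h1)) (by norm_num)

lemma not_le_star_neg2 : ¬ Le star (atom ⟨-2, by norm_num⟩) := by
  intro h
  have h1 := (le_inv h).1 (atom ⟨-1, by norm_num⟩)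
    (show IsLeftOption _ (ofPair (atom ⟨-1, by norm_num⟩) (atom ⟨-3, by norm_num⟩)) from
      leftOption_ofPair_self _ _)
  exact absurd (Subtype.mk_le_mk.mp (lf_atom_le h1)) (by norm_num)

lemma not_lf_Gseq_neg1 (j : ℕ) : ¬ Lf (Gseq j) (atom ⟨-1, by norm_num⟩) := by
  induction j with
  | zero =>
    intro h
    exact absurd (Subtype.mk_le_mk.mp (lf_atom_le h)) (by norm_num)
  | succ j ih =>
    intro h
    rcases lf_inv h with ⟨G', hG', hle⟩ | ⟨H', hH', _⟩ | ⟨a, b, ha, _, _⟩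
    · have hG'' : IsRightOption G' (ofPair (atom ⟨1, by norm_num⟩) (Pn j (Gseq j))) := hG'
      have hG3 := rightOption_ofPair hG''
      subst hG3
      exact ih ((le_inv hle).1 (Gseq j) (leftOption_pn j (Gseq j)))
    · cases hH'
    · have ha' : ofPair (atom ⟨1, by norm_num⟩) (Pn j (Gseq j)) = atom a := ha
      simp [ofPair] at ha'

lemma not_le_pn_neg1 (k : ℕ) : ¬ Le (Pn k (Gseq k)) (atom ⟨-1, by norm_num⟩) := by
  intro h
  exact not_lf_Gseq_neg1 k ((le_inv h).1 (Gseq k) (leftOption_pn k (Gseq k)))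

lemma x_mixed {k m : ℕ} (hp : Odd k ↔ ¬ Odd m) :
    ¬ Le (Pn k (Gseq k)) (Pn m (Gseq m)) := by
  intro h
  have hr := (le_inv h).2.1 (rn m) (rightOption_pn m (Gseq m))
  by_cases hk : Odd k
  · have hm : ¬ Odd m := hp.mp hk
    rw [show rn m = star by simp [rn, hm]] at hr
    rcases lf_inv hr with ⟨G', hG', hle⟩ | ⟨H', hH', hle⟩ | ⟨a, b, ha, _, _⟩
    · have hG'' : IsRightOption G' (ofPair (Gseq k) (rn k)) := by rw [← pn_eq]; exact hG'
      have hG3 := rightOption_ofPair hG''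
      subst hG3
      rw [show rn k = atom ⟨-2, by norm_num⟩ by simp [rn, hk]] at hle
      exact not_le_neg2_star hle
    · have hH'' : IsLeftOption H'
        (ofPair (atom ⟨-1, by norm_num⟩) (atom ⟨-3, by norm_num⟩)) := hH'
      have hH3 := leftOption_ofPair hH''
      subst hH3
      exact not_le_pn_neg1 k hle
    · have ha' : ofPair (Gseq k) (rn k) = atom a := by rw [← pn_eq]; exact ha
      simp [ofPair] at ha'
  · have hm : Odd m := by by_contra h'; exact hk (hp.mpr h')
    rw [show rn m = atom ⟨-2, by norm_num⟩ by simp [rn, hm]] at hr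
    rcases lf_inv hr with ⟨G', hG', hle⟩ | ⟨H', hH', hle⟩ | ⟨a, b, ha, _, _⟩
    · have hG'' : IsRightOption G' (ofPair (Gseq k) (rn k)) := by rw [← pn_eq]; exact hG'
      have hG3 := rightOption_ofPair hG''
      subst hG3
      rw [show rn k = star by simp [rn, hk]] at hle
      exact not_le_star_neg2 hle
    · cases hH'
    · have ha' : ofPair (Gseq k) (rn k) = atom a := by rw [← pn_eq]; exact ha
      simp [ofPair] at ha'

lemma x_same {k m : ℕ} (hm : m < k) (hG : ¬ Le (Gseq k) (Gseq m)) :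
    ¬ Le (Pn k (Gseq k)) (Pn m (Gseq m)) := by
  by_cases hp : (Odd k ↔ ¬ Odd m)
  · exact x_mixed hp
  · intro h
    have hl := (le_inv h).1 (Gseq k) (leftOption_pn k (Gseq k))
    obtain ⟨j, rfl⟩ : ∃ j, k = j + 1 := ⟨k - 1, by omega⟩
    rcases lf_inv hl with ⟨G', hG', hle⟩ | ⟨H', hH', hle⟩ | ⟨a, b, ha, _, _⟩
    · have hG'' : IsRightOption G' (ofPair (atom ⟨1, by norm_num⟩) (Pn j (Gseq j))) := hG'
      have hG3 := rightOption_ofPair hG''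
      subst hG3
      have hpar : Odd j ↔ ¬ Odd m := by
        rw [Nat.odd_add_one] at hp; tauto
      exact x_mixed hpar hle
    · have hH'' : IsLeftOption H' (ofPair (Gseq m) (rn m)) := by rw [← pn_eq]; exact hH'
      have hH3 := leftOption_ofPair hH''
      subst hH3
      exact hG hle
    · have ha' : ofPair (atom ⟨1, by norm_num⟩) (Pn j (Gseq j)) = atom a := ha
      simp [ofPair] at ha'

lemma gseq_main : ∀ m k, m < k → ¬ Le (Gseq k) (Gseq m) := by
  intro m
  induction m with
  | zero =>
    intro k hk h
    obtain ⟨j, rfl⟩ : ∃ j, k = j + 1 := ⟨k - 1, by omega⟩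
    have h1 := (le_inv h).1 (atom ⟨1, by norm_num⟩)
      (show IsLeftOption _ (ofPair (atom ⟨1, by norm_num⟩) (Pn j (Gseq j))) from
        leftOption_ofPair_self _ _)
    exact absurd (Subtype.mk_le_mk.mp (lf_atom_le h1)) (by norm_num)
  | succ j ih =>
    intro k hk h
    have hr := (le_inv h).2.1 (Pn j (Gseq j))
      (show IsRightOption _ (ofPair (atom ⟨1, by norm_num⟩) (Pn j (Gseq j))) from
        rightOption_ofPair_self _ _)
    obtain ⟨i, rfl⟩ : ∃ i, k = i + 1 := ⟨k - 1, by omega⟩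
    rcases lf_inv hr with ⟨G', hG', hle⟩ | ⟨H', hH', hle⟩ | ⟨a, b, ha, _, _⟩
    · have hG'' : IsRightOption G' (ofPair (atom ⟨1, by norm_num⟩) (Pn i (Gseq i))) := hG'
      have hG3 := rightOption_ofPair hG''
      subst hG3
      exact x_same (by omega) (ih i (by omega)) hle
    · have hH'' : IsLeftOption H' (ofPair (Gseq j) (rn j)) := by rw [← pn_eq]; exact hH'
      have hH3 := leftOption_ofPair hH''
      subst hH3
      exact ih (i + 1) (by omega) hle
    · have ha' : ofPair (atom ⟨1, by norm_num⟩) (Pn i (Gseq i)) = atom a := ha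
      simp [ofPair] at ha'

end PoGame


open PoGame in
/-- For every natural number `n`, it is not the case that `G_{n+1} ≤ G_n`. -/
theorem stmt_13 (n : ℕ) : ¬ Le (Gseq (n + 1)) (Gseq n) := by
  exact PoGame.gseq_main n (n + 1) (Nat.lt_succ_self n)
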